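/- Let Ψ : [0,1] → (0,∞) be continuously differentiable with Ψ(0) = 1 and Ψ'(0) = μ, and suppose λ·Ψ'(λ) − Ψ(λ)·log Ψ(λ) ≤ D·λ²·Ψ(λ) for all λ ∈ (0,1]. Then Ψ(λ) ≤ exp(μ·λ + D·λ²) for all λ ∈ [0,1]. -/

import Mathlib

theorem stmt_14 (Ψ Ψ' : ℝ → ℝ) (μ D : ℝ)
    (hpos : ∀ l ∈ Set.Icc (0:ℝ) 1, 0 < Ψ l)
    (hderiv : ∀ l ∈ Set.Icc (0:ℝ) 1, HasDerivAt Ψ (Ψ' l) l)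
    (hcont : ContinuousOn Ψ' (Set.Icc 0 1))
    (h0 : Ψ 0 = 1) (h0' : Ψ' 0 = μ)
    (hineq : ∀ l ∈ Set.Ioc (0:ℝ) 1,
      l * Ψ' l - Ψ l * Real.log (Ψ l) ≤ D * l ^ 2 * Ψ l) :
    ∀ l ∈ Set.Icc (0:ℝ) 1, Ψ l ≤ Real.exp (μ * l + D * l ^ 2) := by
  -- G l = log Ψ l / l - D l for l ≠ 0, μ at 0
  set G : ℝ → ℝ := fun l => if l = 0 then μ else Real.log (Ψ l) / l - D * l with hG
  have hG0 : G 0 = μ := by simp [hG]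
  have hGne : ∀ l : ℝ, l ≠ 0 → G l = Real.log (Ψ l) / l - D * l := by
    intro l hl; simp [hG, hl]
  -- log Ψ has derivative μ at 0
  have hlog0 : HasDerivAt (fun l => Real.log (Ψ l)) μ 0 := by
    have := (hderiv 0 (by simp)).log (by rw [h0]; norm_num)
    simpa [h0, h0'] using this
  -- continuity of Ψ on Icc
  have hΨcont : ∀ x ∈ Set.Icc (0:ℝ) 1, ContinuousAt Ψ x := fun x hx =>
    (hderiv x hx).continuousAt
  -- G continuous on Icc 0 1
  have hGcont : ContinuousOn G (Set.Icc 0 1) := by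
    intro x hx
    rcases eq_or_ne x 0 with rfl | hx0
    · rw [← continuousWithinAt_diff_self]
      have hslope : Filter.Tendsto (fun l => Real.log (Ψ l) / l) (nhdsWithin 0 {(0:ℝ)}ᶜ)
          (nhds μ) := by
        have := hasDerivAt_iff_tendsto_slope.mp hlog0
        have heq : ∀ l : ℝ, slope (fun l => Real.log (Ψ l)) 0 l = Real.log (Ψ l) / l := by
          intro l; simp [slope, h0, div_eq_inv_mul]
        exact this.congr heq
      have htD : Filter.Tendsto (fun l : ℝ => D * l) (nhdsWithin 0 {(0:ℝ)}ᶜ) (nhds 0) := by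
        have : Filter.Tendsto (fun l : ℝ => D * l) (nhds 0) (nhds (D * 0)) := by
          exact (continuous_const.mul continuous_id).tendsto 0
        simpa using this.mono_left nhdsWithin_le_nhds
      have : Filter.Tendsto G (nhdsWithin 0 {(0:ℝ)}ᶜ) (nhds μ) := by
        have := hslope.sub htD
        rw [sub_zero] at this
        refine this.congr' ?_
        filter_upwards [self_mem_nhdsWithin] with l hl
        exact (hGne l hl).symm
      rw [ContinuousWithinAt, hG0]
      exact this.mono_left (nhdsWithin_mono 0 (by intro l hl; exact hl.2))
    · have hf : ContinuousAt (fun l => Real.log (Ψ l) / l - D * l) x := by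
        have h1 : ContinuousAt (fun l => Real.log (Ψ l)) x :=
          (Real.continuousAt_log (ne_of_gt (hpos x hx))).comp (hΨcont x hx)
        exact ((h1.div continuousAt_id hx0).sub (continuousAt_const.mul continuousAt_id))
      have : ContinuousAt G x := by
        refine hf.congr ?_
        filter_upwards [isOpen_ne.mem_nhds hx0] with l hl
        exact (hGne l hl).symm
      exact this.continuousWithinAt
  -- derivative of G nonpositive on interior
  have hGanti : AntitoneOn G (Set.Icc 0 1) := by
    have hint : ∀ x ∈ interior (Set.Icc (0:ℝ) 1),
        HasDerivAt G ((x * Ψ' x - Ψ x * Real.log (Ψ x)) / (x ^ 2 * Ψ x) - D) x := by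
      intro x hx
      rw [interior_Icc] at hx
      have hx0 : x ≠ 0 := ne_of_gt hx.1
      have hxI : x ∈ Set.Icc (0:ℝ) 1 := ⟨hx.1.le, hx.2.le⟩
      have hΨx : 0 < Ψ x := hpos x hxI
      have hlog : HasDerivAt (fun l => Real.log (Ψ l)) (Ψ' x / Ψ x) x :=
        (hderiv x hxI).log (ne_of_gt hΨx)
      have hdiv : HasDerivAt (fun l => Real.log (Ψ l) / l)
          ((Ψ' x / Ψ x * x - Real.log (Ψ x) * 1) / x ^ 2) x :=
        hlog.div (hasDerivAt_id x) hx0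
      have hDl : HasDerivAt (fun l : ℝ => D * l) D x := by
        simpa using (hasDerivAt_id x).const_mul D
      have hfull := hdiv.sub hDl
      have heq : (Ψ' x / Ψ x * x - Real.log (Ψ x) * 1) / x ^ 2 - D
          = (x * Ψ' x - Ψ x * Real.log (Ψ x)) / (x ^ 2 * Ψ x) - D := by
        field_simp
      rw [heq] at hfull
      refine hfull.congr_of_eventuallyEq ?_
      filter_upwards [isOpen_ne.mem_nhds hx0] with l hl
      exact hGne l hl
    refine antitoneOn_of_deriv_nonpos (convex_Icc 0 1) hGcont
      (fun x hx => (hint x hx).differentiableAt.differentiableWithinAt) ?_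
    intro x hx
    rw [(hint x hx).deriv]
    rw [interior_Icc] at hx
    have hxI : x ∈ Set.Ioc (0:ℝ) 1 := ⟨hx.1, hx.2.le⟩
    have hΨx : 0 < Ψ x := hpos x ⟨hx.1.le, hx.2.le⟩
    have hd : 0 < x ^ 2 * Ψ x := mul_pos (pow_pos hx.1 2) hΨx
    have := hineq x hxI
    rw [sub_nonpos, div_le_iff₀ hd]
    linarith [this]
  -- conclude
  intro l hl
  rcases eq_or_lt_of_le hl.1 with rfl | hl0
  · simp [h0]
  · have hle : G l ≤ μ := by
      have := hGanti (by simp : (0:ℝ) ∈ Set.Icc (0:ℝ) 1) hl hl0.le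
      rwa [hG0] at this
    rw [hGne l (ne_of_gt hl0)] at hle
    have hΨl : 0 < Ψ l := hpos l hl
    rw [← Real.log_le_iff_le_exp hΨl]
    have : Real.log (Ψ l) / l ≤ μ + D * l := by linarith
    calc Real.log (Ψ l) = Real.log (Ψ l) / l * l := by field_simp
      _ ≤ (μ + D * l) * l := mul_le_mul_of_nonneg_right this hl0.le
      _ = μ * l + D * l ^ 2 := by ring
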